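/- Main lower bound (combinatorial core): Let n ≥ 2^8, let σ = 2^m with m ≥ 8, let k = ⌊(log₂ n)/(2m)⌋ ≥ 1, and suppose S ≤ (1/8)·n·m. Suppose F is the family of all σ^(n − kσ^k) strings of length n starting with the fixed de Bruijn-style prefix listing all length-k strings, and suppose there is an assignment to each s ∈ F of an S-bit encoding and a probe set T_s ⊆ {0,...,n−1} with |T_s| ≤ Tn/k for some positive integer T, such that any two strings with equal encodings and agreeing on their (equal) probe sets are equal. Then T ≥ k/4. -/

import Mathlib

set_option maxHeartbeats 1000000 in
set_option synthInstance.maxHeartbeats 400000 in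
/-- Main lower bound (combinatorial core): let `n ≥ 2^8`, `σ = 2^m` with `m ≥ 8`,
`k = ⌊log₂ n / (2m)⌋ ≥ 1`, and `S ≤ (1/8)·n·m`.  Let `F` be the family of all
strings of length `n` starting with the fixed de Bruijn-style prefix listing all
length-`k` strings (via the enumeration `e`).  If each `s ∈ F` is assigned an
`S`-bit encoding and a probe set `P s ⊆ {0,…,n−1}` with `|P s| ≤ T·n/k`, such
that any two strings with equal encodings and agreeing on their (equal) probe
sets are equal, then `T ≥ k/4`. -/
theorem stmt_11 (n m k S T : ℕ) (hn : 2 ^ 8 ≤ n) (hm : 8 ≤ m)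
    (σ : ℕ) (hσ : σ = 2 ^ m)
    (hk : k = ⌊Real.logb 2 n / (2 * m)⌋₊) (hk1 : 1 ≤ k)
    (hkn : k * σ ^ k ≤ n)
    (hS : (S : ℝ) ≤ (1 / 8 : ℝ) * n * m)
    (e : Fin (σ ^ k) ≃ (Fin k → Fin σ))
    (F : Finset (Fin n → Fin σ))
    (hF : F = Finset.univ.filter (fun s => ∀ (j : Fin (σ ^ k)) (a : Fin k),
        s ⟨j.1 * k + a.1,
            lt_of_lt_of_le (by nlinarith [j.2, a.2]) hkn⟩ = e j a))
    (enc : (Fin n → Fin σ) → Fin (2 ^ S))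
    (P : (Fin n → Fin σ) → Finset (Fin n))
    (hT : 1 ≤ T)
    (hP : ∀ s ∈ F, (P s).card * k ≤ T * n)
    (hdist : ∀ s ∈ F, ∀ s' ∈ F, enc s = enc s' → P s = P s' →
        (∀ i ∈ P s, s i = s' i) → s = s') :
    (k : ℝ) / 4 ≤ (T : ℝ) := by
  have hk0 : 0 < k := hk1
  have hσ0 : 0 < σ := by rw [hσ]; positivity
  have hn0 : 0 < n := lt_of_lt_of_le (by norm_num) hn
  set K := k * σ ^ k with hK
  set B := T * n / k with hB
  -- `2 * k ≤ σ ^ k`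
  have hmk2 : 2 * k ≤ σ ^ k := by
    calc 2 * k ≤ 2 ^ (2 * k) := le_of_lt Nat.lt_two_pow_self
    _ ≤ 2 ^ (m * k) := Nat.pow_le_pow_right (by norm_num) (by nlinarith)
    _ = σ ^ k := by rw [hσ, ← pow_mul]
  -- from the floor definition of k : `2 ^ (2*m*k) ≤ n`
  have hlogn : (2 * (m:ℝ) * k) ≤ Real.logb 2 n := by
    have hx : (0:ℝ) ≤ Real.logb 2 n / (2 * m) := by
      apply div_nonneg
      · exact Real.logb_nonneg (by norm_num) (by exact_mod_cast le_trans (by norm_num) hn)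
      · positivity
    have hfl := Nat.floor_le hx
    rw [← hk] at hfl
    have h2m : (0:ℝ) < 2 * m := by positivity
    rw [le_div_iff₀ h2m] at hfl
    linarith
  have hpow : (2:ℕ) ^ (2 * m * k) ≤ n := by
    have h1 : ((2:ℝ)) ^ (((2*m*k : ℕ)) : ℝ) ≤ (n:ℝ) := by
      rw [show ((n:ℝ)) = (2:ℝ) ^ (Real.logb 2 n) from
        (Real.rpow_logb (by norm_num) (by norm_num) (by exact_mod_cast hn0)).symm]
      apply Real.rpow_le_rpow_of_exponent_le (by norm_num)
      push_cast
      convert hlogn using 2 <;> push_cast <;> ring_nf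
    rw [Real.rpow_natCast] at h1
    exact_mod_cast h1
  have h2K : 2 * K ≤ n := by
    calc 2 * K = (2 * k) * σ ^ k := by rw [hK]; ring
    _ ≤ σ ^ k * σ ^ k := Nat.mul_le_mul_right _ hmk2
    _ = 2 ^ (2 * m * k) := by rw [hσ, ← pow_add, ← pow_mul]; congr 1; ring
    _ ≤ n := hpow
  -- lower bound on |F|
  have hcardF : σ ^ (n - K) ≤ F.card := by
    set ι : (Fin (n - K) → Fin σ) → (Fin n → Fin σ) := fun g i =>
      if h : (i : ℕ) < K then
        e ⟨(i : ℕ) / k, by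
              rw [Nat.div_lt_iff_lt_mul hk0]
              exact lt_of_lt_of_le h (le_of_eq (by rw [hK, mul_comm]))⟩
          ⟨(i : ℕ) % k, Nat.mod_lt _ hk0⟩
      else g ⟨(i : ℕ) - K, by have := i.2; omega⟩ with hι
    have hmem : ∀ g ∈ (Finset.univ : Finset (Fin (n - K) → Fin σ)), ι g ∈ F := by
      intro g _
      rw [hF, Finset.mem_filter]
      refine ⟨Finset.mem_univ _, fun j a => ?_⟩
      have hlt : j.1 * k + a.1 < K := by
        calc j.1 * k + a.1 < j.1 * k + k := by omega
        _ = (j.1 + 1) * k := by ring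
        _ ≤ σ ^ k * k := Nat.mul_le_mul_right _ j.2
        _ = K := by rw [hK, mul_comm]
      have hdiv : (j.1 * k + a.1) / k = j.1 := by
        rw [mul_comm, Nat.mul_add_div hk0, Nat.div_eq_of_lt a.2]
        omega
      have hmod : (j.1 * k + a.1) % k = a.1 := by
        rw [mul_comm, Nat.mul_add_mod, Nat.mod_eq_of_lt a.2]
      show ι g _ = e j a
      rw [hι]
      simp only [dif_pos hlt]
      simp only [hdiv, hmod, Fin.eta]
    have hinj : Set.InjOn ι (Finset.univ : Finset (Fin (n - K) → Fin σ)) := by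
      intro g _ g' _ hgg
      funext x
      have hx : (x : ℕ) + K < n := by have := x.2; omega
      have h1 := congrFun hgg ⟨(x : ℕ) + K, hx⟩
      rw [hι] at h1
      simp only at h1
      rw [dif_neg (show ¬ ((x:ℕ) + K < K) by omega),
        dif_neg (show ¬ ((x:ℕ) + K < K) by omega)] at h1
      simpa [Nat.add_sub_cancel, Fin.eta] using h1
    calc σ ^ (n - K) = (Finset.univ : Finset (Fin (n - K) → Fin σ)).card := by
          simp [Fintype.card_fun]
    _ ≤ F.card := Finset.card_le_card_of_injOn ι hmem hinj
  -- upper bound on |F|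
  have hBcard : ∀ s ∈ F, (P s).card ≤ B := by
    intro s hs
    rw [hB]
    exact (Nat.le_div_iff_mul_le hk0).2 (hP s hs)
  have hupper : F.card ≤ 2 ^ S * (2 ^ n * σ ^ B) := by
    set Φ : (Fin n → Fin σ) → Fin (2 ^ S) × Finset (Fin n) × (Fin B → Fin σ) := fun s =>
      (enc s, P s, fun i =>
        if h : (i : ℕ) < (P s).card then s ((P s).orderEmbOfFin rfl ⟨i.1, h⟩)
        else ⟨0, hσ0⟩) with hΦ
    have hinj : Set.InjOn Φ F := by
      intro s hs s' hs' hss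
      rw [hΦ] at hss
      simp only [Prod.mk.injEq] at hss
      obtain ⟨henc, hPs, hvals⟩ := hss
      apply hdist s hs s' hs' henc hPs
      intro i hi
      rw [← hPs] at hvals
      have hir : i ∈ Set.range ((P s).orderEmbOfFin rfl) := by
        rw [Finset.range_orderEmbOfFin]; exact hi
      obtain ⟨j, hj⟩ := hir
      have hjB : (j : ℕ) < B := lt_of_lt_of_le j.2 (hBcard s hs)
      have h2 := congrFun hvals ⟨j.1, hjB⟩
      simp only [dif_pos j.2] at h2
      rw [Fin.eta] at h2
      rw [← hj]
      exact h2
    calc F.card ≤ (Finset.univ : Finset (Fin (2 ^ S) × Finset (Fin n) × (Fin B → Fin σ))).card :=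
          Finset.card_le_card_of_injOn Φ (fun a _ => Finset.mem_univ _) hinj
    _ = 2 ^ S * (2 ^ n * σ ^ B) := by
          simp [Fintype.card_prod, Fintype.card_fun, Fintype.card_finset]
  -- exponent comparison
  have hexp : m * (n - K) ≤ S + (n + m * B) := by
    have h2 : (2:ℕ) ^ (m * (n - K)) ≤ 2 ^ (S + (n + m * B)) := by
      calc (2:ℕ) ^ (m * (n - K)) = σ ^ (n - K) := by rw [hσ, ← pow_mul]
      _ ≤ 2 ^ S * (2 ^ n * σ ^ B) := le_trans hcardF hupper
      _ = 2 ^ (S + (n + m * B)) := by rw [hσ, ← pow_mul, ← pow_add, ← pow_add]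
    exact (Nat.pow_le_pow_iff_right (by norm_num)).1 h2
  -- final real arithmetic
  have hKn : K ≤ n := hkn
  have hBk : B * k ≤ T * n := by rw [hB]; exact Nat.div_mul_le_self _ _
  have c1 : (m:ℝ) * ((n:ℝ) - K) ≤ (S:ℝ) + ((n:ℝ) + m * B) := by
    have := hexp
    have hc : ((n - K : ℕ) : ℝ) = (n:ℝ) - K := by
      rw [Nat.cast_sub hKn]
    calc (m:ℝ) * ((n:ℝ) - K) = ((m * (n - K) : ℕ) : ℝ) := by push_cast [hc]; ring
    _ ≤ ((S + (n + m * B) : ℕ) : ℝ) := Nat.cast_le.mpr this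
    _ = (S:ℝ) + ((n:ℝ) + m * B) := by push_cast; ring
  have c2 : 2 * (K:ℝ) ≤ (n:ℝ) := by exact_mod_cast h2K
  have c3 : (B:ℝ) * k ≤ (T:ℝ) * n := by exact_mod_cast hBk
  have c4 : (8:ℝ) ≤ (m:ℝ) := by exact_mod_cast hm
  have c5 : (256:ℝ) ≤ (n:ℝ) := by exact_mod_cast (le_trans (by norm_num) hn)
  have hm0 : (0:ℝ) < m := by linarith
  have hn0r : (0:ℝ) < n := by linarith
  have h6 : (m:ℝ) * n ≤ (m:ℝ) * (4 * B) := by nlinarith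
  have h7 : (n:ℝ) ≤ 4 * B := le_of_mul_le_mul_left h6 hm0
  have h8 : (k:ℝ) * n ≤ (4 * T) * n := by nlinarith [Nat.cast_nonneg (α := ℝ) k]
  have h9 : (k:ℝ) ≤ 4 * T := le_of_mul_le_mul_right h8 hn0r
  linarith
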